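/- arXiv:1802.08170 — 13 statements merged into one kernel-verified Lean document; each statement's English description precedes it below -/
import Mathlib

section
/- Every countable frame is weakly atomic: for every x < y in a countable frame L, there exist u, v with x ≤ u < v ≤ y such that no w satisfies u < w < v. -/
/-- Every countable frame is weakly atomic. -/
theorem stmt_1 {L : Type*} [CompleteLattice L] [Countable L]
    (hframe : ∀ (x : L) (Y : Set L), x ⊓ sSup Y = ⨆ y ∈ Y, x ⊓ y) :
    ∀ x y : L, x < y → ∃ u v : L, x ≤ u ∧ u < v ∧ v ≤ y ∧ ¬∃ w, u < w ∧ w < v := by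
  intro x y hxy
  by_contra hcon
  push_neg at hcon
  -- hcon : ∀ u v, x ≤ u → u < v → v ≤ y → ∃ w, u < w ∧ w < v
  classical
  -- Work in the interval S = Icc x y, which is densely ordered by hcon.
  set S : Set L := Set.Icc x y with hS
  have hxS : x ∈ S := ⟨le_refl x, le_of_lt hxy⟩
  have hyS : y ∈ S := ⟨le_of_lt hxy, le_refl y⟩
  -- Extend the chain {⟨x⟩, ⟨y⟩} in ↥S to a maximal chain C.
  have hchain : IsChain (· ≤ ·) ({⟨x, hxS⟩, ⟨y, hyS⟩} : Set ↥S) := by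
    intro a ha b hb hab
    rcases ha with ha | ha <;> rcases hb with hb | hb <;>
      subst ha <;> subst hb <;> simp_all [Subtype.mk_le_mk, le_of_lt hxy]
  obtain ⟨C, hCmax, hCsub⟩ := hchain.exists_maxChain
  have hxC : (⟨x, hxS⟩ : ↥S) ∈ C := hCsub (by simp)
  have hyC : (⟨y, hyS⟩ : ↥S) ∈ C := hCsub (by simp)
  -- Key: between any two elements of C there is an element of C.
  have dense : ∀ a b : ↥C, a < b → ∃ c : ↥C, a < c ∧ c < b := by
    rintro ⟨⟨a, haS⟩, haC⟩ ⟨⟨b, hbS⟩, hbC⟩ hab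
    have hab' : a < b := by
      simpa [Subtype.mk_lt_mk] using hab
    by_contra hno
    push_neg at hno
    -- every element of C is ≤ a or ≥ b
    have hside : ∀ c : ↥S, c ∈ C → c ≤ ⟨a, haS⟩ ∨ (⟨b, hbS⟩ : ↥S) ≤ c := by
      intro c hcC
      by_contra hc
      push_neg at hc
      have hca : (⟨a, haS⟩ : ↥S) ≤ c := by
        rcases hCmax.1.total haC hcC with h | h
        · exact h
        · exact absurd h hc.1
      have hcb : c ≤ ⟨b, hbS⟩ := by
        rcases hCmax.1.total hcC hbC with h | h
        · exact h
        · exact absurd h hc.2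
      have h1 : (⟨a, haS⟩ : ↥S) < c := lt_of_le_of_ne hca (by
        rintro rfl; exact hc.1 le_rfl)
      have h2 : c < ⟨b, hbS⟩ := lt_of_le_of_ne hcb (by
        rintro rfl; exact hc.2 le_rfl)
      exact absurd h2 (by simpa using hno ⟨c, hcC⟩ (by simpa [Subtype.mk_lt_mk] using h1))
    -- density of [x,y] gives w strictly between a and b
    obtain ⟨w, hw1, hw2⟩ := hcon a b haS.1 hab' hbS.2
    have hwS : w ∈ S := ⟨le_trans haS.1 (le_of_lt hw1), le_trans (le_of_lt hw2) hbS.2⟩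
    -- insert ⟨w⟩ into C : still a chain, so w ∈ C by maximality
    have hwchain : IsChain (· ≤ ·) (insert (⟨w, hwS⟩ : ↥S) C) := by
      apply hCmax.1.insert
      intro c hcC hne
      rcases hside c hcC with h | h
      · right
        exact le_trans h (by simpa [Subtype.mk_le_mk] using le_of_lt hw1)
      · left
        exact le_trans (by simpa [Subtype.mk_le_mk] using le_of_lt hw2) h
    have hwC : (⟨w, hwS⟩ : ↥S) ∈ C := by
      have := hCmax.2 hwchain (Set.subset_insert _ _)
      rw [this]
      exact Set.mem_insert _ _
    have := hno ⟨⟨w, hwS⟩, hwC⟩ (by simpa [Subtype.mk_lt_mk] using hw1)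
    exact absurd (by simpa [Subtype.mk_lt_mk] using hw2) (by simpa using this)
  -- C is a countable nontrivial dense linear order; embed ℚ into it.
  letI : LinearOrder ↥C :=
    { (inferInstance : PartialOrder ↥C) with
      le_total := fun a b => hCmax.1.total a.2 b.2
      toDecidableLE := fun _ _ => Classical.dec _ }
  haveI : DenselyOrdered ↥C := ⟨fun a b hab => by
    obtain ⟨c, h1, h2⟩ := dense a b hab; exact ⟨c, h1, h2⟩⟩
  haveI : Nontrivial ↥C := ⟨⟨⟨⟨x, hxS⟩, hxC⟩, ⟨⟨y, hyS⟩, hyC⟩, by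
    simp only [ne_eq, Subtype.mk.injEq]
    exact fun h => absurd h (ne_of_lt hxy)⟩⟩
  obtain ⟨f⟩ := Order.embedding_from_countable_to_dense (α := ℚ) (β := ↥C)
  -- F : ℚ → L, strictly monotone
  set F : ℚ → L := fun q => ((f q : ↥S) : L) with hF
  have hFmono : StrictMono F := by
    intro p q hpq
    have : f p < f q := f.strictMono hpq
    exact this
  -- Dedekind completion: a strictly monotone map ℝ → L
  set g : ℝ → L := fun r => sSup (F '' {q : ℚ | (q : ℝ) < r}) with hg
  have hgmono : StrictMono g := by
    intro r r' hrr'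
    obtain ⟨q1, hq1, hq1'⟩ := exists_rat_btwn hrr'
    obtain ⟨q2, hq2, hq2'⟩ := exists_rat_btwn hq1'
    have h1 : g r ≤ F q1 := by
      apply sSup_le
      rintro _ ⟨q, hq, rfl⟩
      exact le_of_lt (hFmono (by exact_mod_cast lt_trans hq hq1))
    have h2 : F q1 < F q2 := hFmono (by exact_mod_cast hq2)
    have h3 : F q2 ≤ g r' := le_sSup ⟨q2, hq2', rfl⟩
    exact lt_of_lt_of_le (lt_of_le_of_lt h1 h2) h3
  exact absurd (hgmono.injective.countable) (not_countable (α := ℝ))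
end

section
/- Every countable frame is spatial: for all x < y in a countable frame L there exists a prime element p with x ≤ p and y ≰ p. -/
/-- Every countable frame is spatial: for x < y there is a prime p
with x ≤ p and y ≰ p. -/
theorem stmt_2 {L : Type*} [CompleteLattice L] [Countable L]
    (hframe : ∀ (x : L) (Y : Set L), x ⊓ sSup Y = ⨆ y ∈ Y, x ⊓ y) :
    ∀ x y : L, x < y →
      ∃ p : L, (p ≠ ⊤ ∧ ∀ a b : L, a ⊓ b ≤ p → a ≤ p ∨ b ≤ p) ∧ x ≤ p ∧ ¬ y ≤ p := by
  classical
  intro x y hxy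
  by_contra hcon
  -- binary distributivity from the frame law
  have distrib : ∀ a b c : L, a ⊓ (b ⊔ c) = a ⊓ b ⊔ a ⊓ c := by
    intro a b c
    have h := hframe a ({b, c} : Set L)
    rw [sSup_pair] at h
    rw [h]
    apply le_antisymm
    · apply iSup₂_le
      intro z hz
      rcases Set.mem_insert_iff.mp hz with rfl | hz
      · exact le_sup_left
      · rw [Set.mem_singleton_iff] at hz; subst hz; exact le_sup_right
    · apply sup_le
      · exact le_iSup₂_of_le b (Set.mem_insert _ _) le_rfl
      · exact le_iSup₂_of_le c (Set.mem_insert_of_mem _ rfl) le_rfl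
  have inf_sSup_le : ∀ (a w : L) (S : Set L), (∀ z ∈ S, a ⊓ z ≤ w) → a ⊓ sSup S ≤ w := by
    intro a w S h
    rw [hframe a S]
    exact iSup₂_le h
  -- splitting lemma
  have split : ∀ c : L, x < c → c ≤ y →
      ∃ a b : L, a ≤ c ∧ b ≤ c ∧ x < a ∧ x < b ∧ a ⊓ b ≤ x := by
    intro c hxc hcy
    by_contra hs
    push_neg at hs
    set p := sSup {a : L | a ⊓ c ≤ x} with hpdef
    have hpc : c ⊓ p ≤ x := by
      apply inf_sSup_le
      intro z hz
      rw [inf_comm]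
      exact hz
    have hxp : x ≤ p := le_sSup (show x ⊓ c ≤ x from inf_le_left)
    have hyp : ¬ y ≤ p := by
      intro hyp
      have hcp : c ≤ p := hcy.trans hyp
      have hcx : c ≤ x := by
        have h := hpc
        rwa [inf_eq_left.mpr hcp] at h
      exact hxc.not_ge hcx
    have hptop : p ≠ ⊤ := by
      intro h
      exact hyp (h ▸ le_top)
    have hch : ∀ z : L, ¬ x < z ⊓ c ⊔ x → z ≤ p := by
      intro z hz
      have hzx : z ⊓ c ⊔ x = x := by
        rcases eq_or_lt_of_le (le_sup_right : x ≤ z ⊓ c ⊔ x) with h | h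
        · exact h.symm
        · exact absurd h hz
      exact le_sSup (show z ⊓ c ≤ x from le_trans le_sup_left hzx.le)
    have hprime : ∀ a b : L, a ⊓ b ≤ p → a ≤ p ∨ b ≤ p := by
      intro a b hab
      have h1 : b ⊓ c ⊓ (a ⊓ c) ≤ x := by
        have h2 : b ⊓ c ⊓ (a ⊓ c) ≤ a ⊓ b ⊓ c :=
          le_inf (le_inf (inf_le_of_right_le inf_le_left) (inf_le_of_left_le inf_le_left))
            (inf_le_of_left_le inf_le_right)
        calc b ⊓ c ⊓ (a ⊓ c) ≤ a ⊓ b ⊓ c := h2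
          _ ≤ p ⊓ c := inf_le_inf_right c hab
          _ = c ⊓ p := inf_comm _ _
          _ ≤ x := hpc
      have hkey : (a ⊓ c ⊔ x) ⊓ (b ⊓ c ⊔ x) ≤ x := by
        rw [distrib (a ⊓ c ⊔ x) (b ⊓ c) x]
        apply sup_le
        · rw [inf_comm (a ⊓ c ⊔ x) (b ⊓ c), distrib (b ⊓ c) (a ⊓ c) x]
          exact sup_le h1 inf_le_right
        · exact inf_le_right
      by_cases ha : x < a ⊓ c ⊔ x
      · by_cases hb : x < b ⊓ c ⊔ x
        · exact absurd hkey
            (hs _ _ (sup_le inf_le_right hxc.le) (sup_le inf_le_right hxc.le) ha hb)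
        · exact Or.inr (hch b hb)
      · exact Or.inl (hch a ha)
    exact hcon ⟨p, ⟨hptop, hprime⟩, hxp, hyp⟩
  -- choose splitting data
  choose F G hF1 hG1 hF2 hG2 hFG using split
  -- recursive sequence of nested elements
  let A : ℕ → {c : L // x < c ∧ c ≤ y} := fun n =>
    Nat.rec ⟨y, hxy, le_rfl⟩
      (fun _ c => ⟨F c.1 c.2.1 c.2.2, hF2 c.1 c.2.1 c.2.2,
        (hF1 c.1 c.2.1 c.2.2).trans c.2.2⟩) n
  let E : ℕ → L := fun n => G (A n).1 (A n).2.1 (A n).2.2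
  have hAsucc : ∀ n, (A (n + 1)).1 = F (A n).1 (A n).2.1 (A n).2.2 := fun n => rfl
  have hAanti : Antitone (fun n => (A n).1) := by
    apply antitone_nat_of_succ_le
    intro n
    rw [hAsucc n]
    exact hF1 _ _ _
  have hEx : ∀ n, x < E n := fun n => hG2 _ _ _
  have hcross : ∀ n m : ℕ, n < m → E n ⊓ E m ≤ x := by
    intro n m hnm
    have h1 : E m ≤ (A (n + 1)).1 := (hG1 _ _ _).trans (hAanti hnm)
    calc E n ⊓ E m ≤ E n ⊓ (A (n + 1)).1 := inf_le_inf_left _ h1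
      _ = F (A n).1 (A n).2.1 (A n).2.2 ⊓ E n := by rw [hAsucc n, inf_comm]
      _ ≤ x := hFG _ _ _
  have hne : ∀ n m : ℕ, n ≠ m → E n ⊓ E m ≤ x := by
    intro n m h
    rcases h.lt_or_gt with h' | h'
    · exact hcross n m h'
    · rw [inf_comm]; exact hcross m n h'
  -- the injection from Set ℕ
  let u : Set ℕ → L := fun s => sSup (insert x (E '' s))
  have hmem : ∀ (n : ℕ) (s : Set ℕ), n ∈ s → E n ≤ u s := by
    intro n s hn
    exact le_sSup (Set.mem_insert_of_mem _ (Set.mem_image_of_mem E hn))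
  have hout : ∀ (n : ℕ) (s : Set ℕ), n ∉ s → E n ⊓ u s ≤ x := by
    intro n s hn
    apply inf_sSup_le
    rintro z (rfl | ⟨m, hm, rfl⟩)
    · exact inf_le_right
    · exact hne n m (by rintro rfl; exact hn hm)
  have hinj : Function.Injective u := by
    have key : ∀ s t : Set ℕ, u s = u t → s ⊆ t := by
      intro s t h n hn
      by_contra hnt
      have h1 : E n ≤ u t := h ▸ hmem n s hn
      have h2 : E n ⊓ u t ≤ x := hout n t hnt
      rw [inf_eq_left.mpr h1] at h2
      exact (hEx n).not_ge h2
    intro s t h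
    exact subset_antisymm (key s t h) (key t s h.symm)
  have : Countable (Set ℕ) := hinj.countable
  obtain ⟨g0, hg0⟩ := Countable.exists_injective_nat (Set ℕ)
  exact Function.cantor_injective g0 hg0
end

section
/- A countable complete lattice that is both a frame and a coframe is superalgebraic: for all x < y there exists a supercompact element q with q ≤ y and q ≰ x. -/
/-- A countable complete lattice that is both a frame and a coframe
is superalgebraic: for x < y there is a supercompact q with q ≤ y and q ≰ x. -/
theorem stmt_3 {L : Type*} [CompleteLattice L] [Countable L]
    (hframe : ∀ (x : L) (Y : Set L), x ⊓ sSup Y = ⨆ y ∈ Y, x ⊓ y)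
    (hcoframe : ∀ (x : L) (Y : Set L), x ⊔ sInf Y = ⨅ y ∈ Y, x ⊔ y) :
    ∀ x y : L, x < y →
      ∃ q : L, (∀ S : Set L, q ≤ sSup S → ∃ s ∈ S, q ≤ s) ∧ q ≤ y ∧ ¬ q ≤ x := by
  classical
  intro x y hxy
  by_contra hwin
  push_neg at hwin
  -- hwin : ∀ q, (supercompact q) → q ≤ y → q ≤ x
  -- Step 1: density of the interval [x, y]
  have dens : ∀ u w : L, x ≤ u → u < w → w ≤ y → ∃ z, u < z ∧ z < w := by
    intro u w hxu huw hwy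
    by_contra hz
    push_neg at hz
    -- hz : ∀ z, u < z → ¬ z < w , so [u,w] = {u, w} is a covering pair
    have hcov : ∀ z, u ≤ z → z ≤ w → z = u ∨ z = w := by
      intro z h1 h2
      rcases eq_or_lt_of_le h1 with h | h
      · exact Or.inl h.symm
      · rcases eq_or_lt_of_le h2 with h' | h'
        · exact Or.inr h'
        · exact absurd h' (hz z h)
    set K : Set L := {s | w ≤ u ⊔ (s ⊓ w)} with hK
    set q : L := sInf K ⊓ w with hqdef
    have hwK : w ∈ K := by
      simp only [hK, Set.mem_setOf_eq, inf_idem]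
      exact le_sup_right
    have hinf : sInf ((fun s => s ⊓ w) '' K) = q := by
      apply le_antisymm
      · apply le_inf
        · exact le_sInf fun s hs => le_trans (sInf_le ⟨s, hs, rfl⟩) inf_le_left
        · exact le_trans (sInf_le ⟨w, hwK, rfl⟩) inf_le_right
      · refine le_sInf ?_
        rintro c ⟨s, hs, rfl⟩
        exact inf_le_inf_right _ (sInf_le hs)
    have haux : w ≤ u ⊔ q := by
      rw [← hinf, hcoframe]
      refine le_iInf₂ ?_
      rintro c ⟨s, hs, rfl⟩
      exact hs
    have hqu : ¬ q ≤ u := by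
      intro hqu
      have : w ≤ u := le_trans haux (sup_le le_rfl hqu)
      exact absurd this (not_le_of_gt huw)
    have hsc : ∀ S : Set L, q ≤ sSup S → ∃ s ∈ S, q ≤ s := by
      intro S hS
      by_contra hno
      push_neg at hno
      have hsmall : ∀ s ∈ S, w ⊓ s ≤ u := by
        intro s hs
        rcases hcov (u ⊔ (w ⊓ s)) le_sup_left (sup_le (le_of_lt huw) inf_le_left) with h | h
        · calc w ⊓ s ≤ u ⊔ (w ⊓ s) := le_sup_right
            _ = u := h
        · exfalso
          have hsK : s ∈ K := by
            simp only [hK, Set.mem_setOf_eq]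
            rw [inf_comm]
            exact h.ge
          exact hno s hs (le_trans inf_le_left (sInf_le hsK))
      have hwu : w ⊓ sSup S ≤ u := by
        rw [hframe]
        exact iSup₂_le hsmall
      exact hqu (le_trans (le_inf inf_le_right hS) hwu)
    exact hqu (le_trans (hwin q hsc (le_trans inf_le_right hwy)) hxu)
  -- Step 2: build a binary tree of nested nontrivial intervals inside [x,y]
  have key : ∀ p : L × L, ∃ z : L × L,
      (x ≤ p.1 ∧ p.1 < p.2 ∧ p.2 ≤ y) →
        (z.1 < z.2 ∧ (x ≤ p.1 ∧ p.1 < z.1 ∧ z.1 ≤ y) ∧ (x ≤ z.2 ∧ z.2 < p.2 ∧ p.2 ≤ y)) := by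
    intro p
    by_cases hp : x ≤ p.1 ∧ p.1 < p.2 ∧ p.2 ≤ y
    · obtain ⟨h1, h2, h3⟩ := hp
      obtain ⟨z₂, hz₂1, hz₂2⟩ := dens p.1 p.2 h1 h2 h3
      obtain ⟨z₁, hz₁1, hz₁2⟩ := dens p.1 z₂ h1 hz₂1 (le_trans (le_of_lt hz₂2) h3)
      refine ⟨(z₁, z₂), fun _ => ⟨hz₁2, ⟨h1, hz₁1, ?_⟩, ⟨?_, hz₂2, h3⟩⟩⟩
      · exact le_trans (le_of_lt (lt_trans hz₁2 hz₂2)) h3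
      · exact le_trans h1 (le_of_lt (lt_trans hz₁1 hz₁2))
    · exact ⟨p, fun h => absurd h hp⟩
  choose g hg using key
  let step : L × L → Bool → L × L := fun p b => if b then ((g p).2, p.2) else (p.1, (g p).1)
  let node : (ℕ → Bool) → ℕ → L × L :=
    fun α n => Nat.rec (x, y) (fun k ih => step ih (α k)) n
  have hnode_succ : ∀ α k, node α (k + 1) = step (node α k) (α k) := fun _ _ => rfl
  have hstep_false : ∀ p, step p false = (p.1, (g p).1) := fun p => rfl
  have hstep_true : ∀ p, step p true = ((g p).2, p.2) := fun p => rfl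
  have hP : ∀ α n, x ≤ (node α n).1 ∧ (node α n).1 < (node α n).2 ∧ (node α n).2 ≤ y := by
    intro α n
    induction n with
    | zero => exact ⟨le_rfl, hxy, le_rfl⟩
    | succ k ih =>
      have h := hg (node α k) ih
      rw [hnode_succ]
      cases hb : α k
      · rw [hstep_false]
        exact h.2.1
      · rw [hstep_true]
        exact h.2.2
  have step1 : ∀ α k, (node α k).1 ≤ (node α (k + 1)).1 := by
    intro α k
    rw [hnode_succ]
    have h := hg (node α k) (hP α k)
    cases hb : α k
    · rw [hstep_false]
    · rw [hstep_true]
      exact le_of_lt (lt_trans h.2.1.2.1 h.1)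
  have step2 : ∀ α k, (node α (k + 1)).2 ≤ (node α k).2 := by
    intro α k
    rw [hnode_succ]
    have h := hg (node α k) (hP α k)
    cases hb : α k
    · rw [hstep_false]
      exact le_of_lt (lt_trans h.1 h.2.2.2.1)
    · rw [hstep_true]
  have hmono1 : ∀ α n m, n ≤ m → (node α n).1 ≤ (node α m).1 := by
    intro α n m hnm
    induction m with
    | zero =>
      have : n = 0 := Nat.le_zero.mp hnm
      subst this; exact le_rfl
    | succ k ih =>
      rcases Nat.lt_or_ge n (k + 1) with h | h
      · exact le_trans (ih (Nat.lt_succ_iff.mp h)) (step1 α k)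
      · have : n = k + 1 := le_antisymm hnm h
        subst this; exact le_rfl
  have hmono2 : ∀ α n m, n ≤ m → (node α m).2 ≤ (node α n).2 := by
    intro α n m hnm
    induction m with
    | zero =>
      have : n = 0 := Nat.le_zero.mp hnm
      subst this; exact le_rfl
    | succ k ih =>
      rcases Nat.lt_or_ge n (k + 1) with h | h
      · exact le_trans (step2 α k) (ih (Nat.lt_succ_iff.mp h))
      · have : n = k + 1 := le_antisymm hnm h
        subst this; exact le_rfl
  have hloc : ∀ α β : ℕ → Bool, ∀ n, (∀ k, k < n → α k = β k) → node α n = node β n := by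
    intro α β n h
    induction n with
    | zero => rfl
    | succ k ih =>
      rw [hnode_succ, hnode_succ, ih (fun j hj => h j (lt_trans hj k.lt_succ_self)),
        h k k.lt_succ_self]
  set X : (ℕ → Bool) → L := fun α => ⨆ n, (node α n).1 with hX
  have sep : ∀ α β : ℕ → Bool, ∀ n₀, (∀ k, k < n₀ → α k = β k) →
      α n₀ = false → β n₀ = true → X α ≠ X β := by
    intro α β n₀ hag hα hβ
    have he : node α n₀ = node β n₀ := hloc α β n₀ hag
    have hPp := hP α n₀
    have h := hg (node α n₀) hPp
    have hXα : X α ≤ (g (node α n₀)).1 := by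
      refine iSup_le ?_
      intro n
      rcases le_or_gt n n₀ with hn | hn
      · exact le_trans (hmono1 α n n₀ hn) (le_of_lt h.2.1.2.1)
      · have h1 : (node α n).1 ≤ (node α n).2 := le_of_lt (hP α n).2.1
        have h2 : (node α n).2 ≤ (node α (n₀ + 1)).2 := hmono2 α (n₀ + 1) n hn
        have h3 : (node α (n₀ + 1)).2 = (g (node α n₀)).1 := by
          rw [hnode_succ, hα, hstep_false]
        exact le_trans h1 (le_trans h2 (le_of_eq h3))
    have hXβ : (g (node α n₀)).2 ≤ X β := by
      have h3 : (node β (n₀ + 1)).1 = (g (node α n₀)).2 := by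
        rw [hnode_succ, hβ, hstep_true, ← he]
      exact le_trans (le_of_eq h3.symm) (le_iSup (fun n => (node β n).1) (n₀ + 1))
    intro hXeq
    have : (g (node α n₀)).2 ≤ (g (node α n₀)).1 := le_trans hXβ (hXeq ▸ hXα)
    exact absurd h.1 (not_lt_of_ge this)
  have hinj : Function.Injective X := by
    intro α β hab
    by_contra hne
    have hex : ∃ k, α k ≠ β k := Function.ne_iff.mp hne
    have hag : ∀ k, k < Nat.find hex → α k = β k :=
      fun k hk => not_not.mp (Nat.find_min hex hk)
    have hne0 : α (Nat.find hex) ≠ β (Nat.find hex) := Nat.find_spec hex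
    cases hα : α (Nat.find hex) <;> cases hβ : β (Nat.find hex)
    · exact hne0 (hα.trans hβ.symm)
    · exact sep α β (Nat.find hex) hag hα hβ hab
    · exact sep β α (Nat.find hex) (fun k hk => (hag k hk).symm) hβ hα hab.symm
    · exact hne0 (hα.trans hβ.symm)
  -- Step 3: contradiction with countability via Cantor's theorem
  have hcnt : Countable (ℕ → Bool) := hinj.countable
  obtain ⟨f, hf⟩ := Countable.exists_injective_nat (ℕ → Bool)
  have hFinj : Function.Injective (fun s : Set ℕ => f (fun n => decide (n ∈ s))) := by
    intro s t hst
    have := hf hst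
    ext n
    have := congrFun this n
    simpa using this
  exact Function.cantor_injective _ hFinj
end

section
/- A topological space is a web space (each point has a neighborhood base of webs around it) if and only if its lattice of open sets is a coframe. -/
open TopologicalSpace Set

/-- The specialization preorder of the paper: x ≤ y iff every open set
containing x contains y (equivalently x ∈ closure {y}). -/
def sle {X : Type*} [TopologicalSpace X] (x y : X) : Prop :=
  ∀ U : Set X, IsOpen U → x ∈ U → y ∈ U

lemma sle_iff_mem_closure {X : Type*} [TopologicalSpace X] (x y : X) :
    sle x y ↔ x ∈ closure ({y} : Set X) := by
  rw [mem_closure_iff]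
  constructor
  · intro h o ho hx
    exact ⟨y, h o ho hx, rfl⟩
  · intro h U hU hx
    obtain ⟨z, hz, rfl⟩ := h U hU hx
    exact hz

lemma sle_refl {X : Type*} [TopologicalSpace X] (x : X) : sle x x :=
  fun _ _ hx => hx

lemma opens_mem_sup {X : Type*} [TopologicalSpace X] {s t : TopologicalSpace.Opens X} {x : X} :
    x ∈ s ⊔ t ↔ x ∈ s ∨ x ∈ t := by
  rw [← SetLike.mem_coe, TopologicalSpace.Opens.coe_sup, Set.mem_union]; rfl

/-- A space is a web space iff its lattice of open sets is a coframe. -/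
theorem stmt_4 {X : Type*} [TopologicalSpace X] :
    (∀ (x : X) (U : Set X), IsOpen U → x ∈ U →
      ∃ W V : Set X, IsOpen V ∧ x ∈ V ∧ V ⊆ W ∧ W ⊆ U ∧ x ∈ W ∧
        ∀ y ∈ W, ∃ w ∈ W, sle w x ∧ sle w y) ↔
    (∀ (U : TopologicalSpace.Opens X) (Y : Set (TopologicalSpace.Opens X)),
      U ⊔ sInf Y = ⨅ V ∈ Y, U ⊔ V) := by
  constructor
  · -- web space ⇒ coframe
    intro hweb U Y
    refine le_antisymm (le_iInf₂ fun V hV => sup_le_sup_left (sInf_le hV) U) ?_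
    intro x hx
    obtain ⟨W, V₀, hV₀open, hxV₀, hV₀W, hWG, hxW, hwebW⟩ :=
      hweb x ↑(⨅ V ∈ Y, U ⊔ V) (⨅ V ∈ Y, U ⊔ V).isOpen hx
    by_cases hxU : x ∈ U
    · exact opens_mem_sup.mpr (Or.inl hxU)
    · refine opens_mem_sup.mpr (Or.inr ?_)
      have hle : (⟨V₀, hV₀open⟩ : Opens X) ≤ sInf Y := by
        refine le_sInf fun V' hV' => ?_
        intro y hy
        obtain ⟨w, hwW, hwx, hwy⟩ := hwebW y (hV₀W hy)
        have hwUV : w ∈ U ⊔ V' := by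
          have h1 : (⨅ V ∈ Y, U ⊔ V) ≤ U ⊔ V' := iInf₂_le V' hV'
          exact h1 (hWG hwW)
        rcases opens_mem_sup.mp hwUV with hwU | hwV
        · exact absurd (hwx U U.isOpen hwU) hxU
        · exact hwy V' V'.isOpen hwV
      exact hle hxV₀
  · -- coframe ⇒ web space
    intro hcof x U hU hxU
    set W : Set X := {y | y ∈ U ∧ ∃ w ∈ U, sle w x ∧ sle w y} with hW
    have hxW : x ∈ W := ⟨hxU, x, hxU, sle_refl x, sle_refl x⟩
    set U' : Opens X := ⟨(closure {x})ᶜ, isClosed_closure.isOpen_compl⟩ with hU'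
    set Y : Set (Opens X) :=
      (fun y : X => (⟨(closure {y})ᶜ, isClosed_closure.isOpen_compl⟩ : Opens X)) '' (U \ W)
      with hY
    -- U ≤ U' ⊔ V for every V ∈ Y
    have hUle : (⟨U, hU⟩ : Opens X) ≤ ⨅ V ∈ Y, U' ⊔ V := by
      refine le_iInf₂ fun V hV => ?_
      obtain ⟨y, hy, rfl⟩ := hV
      intro z hzU
      refine opens_mem_sup.mpr ?_
      by_cases hz : z ∈ closure ({y} : Set X)
      · -- z ∈ U ∩ closure {y}, so z ∉ closure {x}, else y ∈ W
        left
        intro hzx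
        have : y ∈ W :=
          ⟨hy.1, z, hzU, (sle_iff_mem_closure z x).mpr hzx, (sle_iff_mem_closure z y).mpr hz⟩
        exact hy.2 this
      · exact Or.inr hz
    have hxInf : x ∈ U' ⊔ sInf Y := by
      rw [hcof U' Y]
      exact hUle hxU
    have hxsInf : x ∈ sInf Y := by
      rcases opens_mem_sup.mp hxInf with h | h
      · exact absurd (subset_closure (Set.mem_singleton x)) h
      · exact h
    refine ⟨W, ↑(sInf Y) ∩ U, (sInf Y).isOpen.inter hU, ⟨hxsInf, hxU⟩, ?_, fun y hy => hy.1, hxW, ?_⟩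
    · -- sInf Y ∩ U ⊆ W
      rintro z ⟨hz1, hz2⟩
      by_contra hzW
      have hmem : (⟨(closure {z})ᶜ, isClosed_closure.isOpen_compl⟩ : Opens X) ∈ Y :=
        ⟨z, ⟨hz2, hzW⟩, rfl⟩
      have : z ∈ (closure ({z} : Set X))ᶜ := sInf_le hmem hz1
      exact this (subset_closure rfl)
    · rintro y ⟨hyU, w, hwU, hwx, hwy⟩
      exact ⟨w, ⟨hwU, w, hwU, hwx, sle_refl w⟩, hwx, hwy⟩
end

section
/- A topological space is a C-space (every point has a neighborhood base of cores) if and only if its interior operator preserves arbitrary unions of upper sets: for every family (Y_i) of upper sets with respect to the specialization preorder, int(⋃Y_i) = ⋃ int(Y_i). -/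
/-- The core of a point: the saturation ↑x of the singleton {x}. -/
def core {X : Type*} [TopologicalSpace X] (x : X) : Set X := {y | sle x y}

/-- A space is a C-space iff its interior operator preserves
arbitrary unions of upper sets. -/
theorem stmt_6 {X : Type*} [TopologicalSpace X] :
    (∀ (x : X) (U : Set X), IsOpen U → x ∈ U →
      ∃ u : X, x ∈ interior (core u) ∧ core u ⊆ U) ↔
    (∀ 𝒴 : Set (Set X), (∀ Y ∈ 𝒴, ∀ x ∈ Y, ∀ y, sle x y → y ∈ Y) →
      interior (⋃₀ 𝒴) = ⋃ Y ∈ 𝒴, interior Y) := by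
  constructor
  · intro hC 𝒴 hup
    apply Set.Subset.antisymm
    · intro x hx
      obtain ⟨u, hxu, hsub⟩ := hC x (interior (⋃₀ 𝒴)) isOpen_interior hx
      have hu : u ∈ ⋃₀ 𝒴 := interior_subset (hsub (fun U hU hU' => hU'))
      obtain ⟨Y, hY, huY⟩ := hu
      have hcY : core u ⊆ Y := fun y hy => hup Y hY u huY y hy
      refine Set.mem_iUnion₂.2 ⟨Y, hY, interior_mono hcY hxu⟩
    · exact Set.iUnion₂_subset fun Y hY => interior_mono (Set.subset_sUnion_of_mem hY)
  · intro h x U hU hxU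
    set 𝒴 : Set (Set X) := (fun u => core u) '' U with h𝒴
    have hup : ∀ Y ∈ 𝒴, ∀ a ∈ Y, ∀ y, sle a y → y ∈ Y := by
      rintro Y ⟨u, _, rfl⟩ a ha y hy
      exact fun V hV huV => hy V hV (ha V hV huV)
    have hUeq : ⋃₀ 𝒴 = U := by
      apply Set.Subset.antisymm
      · rintro y ⟨Y, ⟨u, huU, rfl⟩, hy⟩
        exact hy U hU huU
      · intro u huU
        exact ⟨core u, ⟨u, huU, rfl⟩, fun V hV huV => huV⟩
    have := h 𝒴 hup
    rw [hUeq, hU.interior_eq] at this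
    have hx : x ∈ ⋃ Y ∈ 𝒴, interior Y := this ▸ hxU
    obtain ⟨Y, hY, hxY⟩ := Set.mem_iUnion₂.1 hx
    obtain ⟨u, huU, rfl⟩ := hY
    exact ⟨u, hxY, fun y hy => hy U hU huU⟩
end

section
/- For a distributive complete lattice L, the weak upper space Υ L (with topology generated by complements of principal ideals) is a web space if and only if L is a frame. -/
/-- The weak upper topology of a (quasi-)ordered set: generated by the
complements of principal ideals. -/
def upTop (L : Type*) [LE L] : TopologicalSpace L :=
  TopologicalSpace.generateFrom {U : Set L | ∃ y : L, U = {x | ¬ x ≤ y}}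

open TopologicalSpace

lemma upTop_isOpen_iff {L : Type*} [LE L] {U : Set L} :
    (upTop L).IsOpen U ↔ GenerateOpen {U : Set L | ∃ y : L, U = {x | ¬ x ≤ y}} U :=
  Iff.rfl

/-- Open sets of the weak upper topology are upper sets. -/
lemma upTop_upper {L : Type*} [Preorder L] {U : Set L} (h : (upTop L).IsOpen U) :
    ∀ ⦃a b : L⦄, a ∈ U → a ≤ b → b ∈ U := by
  rw [upTop_isOpen_iff] at h
  induction h with
  | basic U hU =>
      obtain ⟨y, rfl⟩ := hU
      intro a b ha hab hb
      exact ha (hab.trans hb)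
  | univ => intro a b _ _; trivial
  | inter U V _ _ ihU ihV =>
      intro a b ha hab
      exact ⟨ihU ha.1 hab, ihV ha.2 hab⟩
  | sUnion S _ ih =>
      intro a b ha hab
      obtain ⟨U, hUS, haU⟩ := ha
      exact ⟨U, hUS, ih U hUS haU hab⟩

/-- Every point of an open set of the weak upper topology has a basic
neighborhood inside it: a finite intersection of subbasic sets. -/
lemma upTop_basis {L : Type*} [Preorder L] {U : Set L} (h : (upTop L).IsOpen U) :
    ∀ x ∈ U, ∃ F : Finset L, (∀ b ∈ F, ¬ x ≤ b) ∧ {z | ∀ b ∈ F, ¬ z ≤ b} ⊆ U := by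
  classical
  rw [upTop_isOpen_iff] at h
  induction h with
  | basic U hU =>
      obtain ⟨y, rfl⟩ := hU
      intro x hx
      refine ⟨{y}, by simpa using hx, fun z hz => ?_⟩
      simpa using hz y (Finset.mem_singleton_self y)
  | univ => intro x _; exact ⟨∅, by simp, by simp⟩
  | inter U V _ _ ihU ihV =>
      intro x hx
      obtain ⟨F1, hF1, hsub1⟩ := ihU x hx.1
      obtain ⟨F2, hF2, hsub2⟩ := ihV x hx.2
      refine ⟨F1 ∪ F2, ?_, ?_⟩
      · intro b hb
        rcases Finset.mem_union.1 hb with h | h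
        · exact hF1 b h
        · exact hF2 b h
      · intro z hz
        exact ⟨hsub1 fun b hb => hz b (Finset.mem_union_left _ hb),
               hsub2 fun b hb => hz b (Finset.mem_union_right _ hb)⟩
  | sUnion S _ ih =>
      intro x hx
      obtain ⟨U, hUS, hxU⟩ := hx
      obtain ⟨F, hF, hsub⟩ := ih U hUS x hxU
      exact ⟨F, hF, fun z hz => ⟨U, hUS, hsub hz⟩⟩

/-- For a distributive complete lattice L, the weak upper space
Υ L is a web space iff L is a frame. -/
theorem stmt_7 {L : Type*} [CompleteLattice L]
    (hdist : ∀ a b c : L, a ⊓ (b ⊔ c) = (a ⊓ b) ⊔ (a ⊓ c)) :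
    (∀ (x : L) (U : Set L), (upTop L).IsOpen U → x ∈ U →
      ∃ W V : Set L, (upTop L).IsOpen V ∧ x ∈ V ∧ V ⊆ W ∧ W ⊆ U ∧ x ∈ W ∧
        ∀ y ∈ W, ∃ w ∈ W,
          (∀ O : Set L, (upTop L).IsOpen O → w ∈ O → x ∈ O) ∧
          (∀ O : Set L, (upTop L).IsOpen O → w ∈ O → y ∈ O)) ↔
    (∀ (x : L) (Y : Set L), x ⊓ sSup Y = ⨆ y ∈ Y, x ⊓ y) := by
  classical
  constructor
  · -- web space ⇒ frame
    intro hweb x Y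
    refine le_antisymm ?_ (iSup₂_le fun y hy => inf_le_inf_left x (le_sSup hy))
    by_contra hcon
    set s := ⨆ y ∈ Y, x ⊓ y with hs
    have hUopen : (upTop L).IsOpen {z : L | ¬ z ≤ s} :=
      GenerateOpen.basic _ ⟨s, rfl⟩
    obtain ⟨W, V, hV, hxV, hVW, hWU, hxW, hwebW⟩ :=
      hweb (x ⊓ sSup Y) _ hUopen hcon
    obtain ⟨F, hF, hsub⟩ := upTop_basis hV _ hxV
    have hex : ∀ b ∈ F, ∃ y ∈ Y, ¬ y ≤ b := by
      intro b hb
      by_contra hno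
      push_neg at hno
      exact hF b hb (le_trans inf_le_right (sSup_le hno))
    choose! f hfY hfb using hex
    set ystar := F.sup f with hystar
    have hystarN : ystar ∈ {z : L | ∀ b ∈ F, ¬ z ≤ b} := by
      intro b hb hle
      exact hfb b hb (le_trans (Finset.le_sup hb) hle)
    obtain ⟨w, hwW, h1, h2⟩ := hwebW ystar (hVW (hsub hystarN))
    have hwx : w ≤ x ⊓ sSup Y := by
      by_contra hwx
      exact (h1 {z : L | ¬ z ≤ x ⊓ sSup Y}
        (GenerateOpen.basic _ ⟨x ⊓ sSup Y, rfl⟩) hwx) le_rfl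
    have hwy : w ≤ ystar := by
      by_contra hwy
      exact (h2 {z : L | ¬ z ≤ ystar}
        (GenerateOpen.basic _ ⟨ystar, rfl⟩) hwy) le_rfl
    have hxys : x ⊓ ystar ≤ s := by
      refine Finset.sup_induction (p := fun z => x ⊓ z ≤ s) ?_ ?_ ?_
      · exact inf_le_right.trans bot_le
      · intro a₁ ha₁ a₂ ha₂
        rw [hdist]
        exact sup_le ha₁ ha₂
      · intro b hb
        exact le_iSup₂ (f := fun y (_ : y ∈ Y) => x ⊓ y) (f b) (hfY b hb)
    exact hWU hwW (le_trans (le_inf (hwx.trans inf_le_left) hwy) hxys)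
  · -- frame ⇒ web space
    intro hframe x U hU hxU
    obtain ⟨F, hF, hsub⟩ := upTop_basis hU x hxU
    have hopen : (upTop L).IsOpen {z : L | ∀ b ∈ F, ¬ x ⊓ z ≤ b} := by
      have heq : {z : L | ∀ b ∈ F, ¬ x ⊓ z ≤ b} =
          ⋂ b ∈ F, {z : L | ¬ z ≤ sSup {u : L | x ⊓ u ≤ b}} := by
        ext z
        simp only [Set.mem_iInter, Set.mem_setOf_eq]
        refine forall₂_congr fun b hb => not_congr ?_
        constructor
        · intro h; exact le_sSup h
        · intro h
          calc x ⊓ z ≤ x ⊓ sSup {u : L | x ⊓ u ≤ b} := inf_le_inf_left x h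
            _ = ⨆ u ∈ {u : L | x ⊓ u ≤ b}, x ⊓ u := hframe x _
            _ ≤ b := iSup₂_le fun u hu => hu
      rw [heq]
      letI : TopologicalSpace L := upTop L
      exact Set.Finite.isOpen_biInter F.finite_toSet
        fun b _ => GenerateOpen.basic _ ⟨_, rfl⟩
    have hxmem : x ∈ {z : L | ∀ b ∈ F, ¬ x ⊓ z ≤ b} := by
      intro b hb
      rw [inf_idem]
      exact hF b hb
    refine ⟨{z : L | ∀ b ∈ F, ¬ x ⊓ z ≤ b}, {z : L | ∀ b ∈ F, ¬ x ⊓ z ≤ b},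
      hopen, hxmem, subset_rfl, ?_, hxmem, ?_⟩
    · intro z hz
      exact hsub fun b hb hle => hz b hb (le_trans inf_le_right hle)
    · intro y hy
      refine ⟨x ⊓ y, ?_, ?_, ?_⟩
      · intro b hb
        rw [← inf_assoc, inf_idem]
        exact hy b hb
      · intro O hO hwO
        exact upTop_upper hO hwO inf_le_left
      · intro O hO hwO
        exact upTop_upper hO hwO inf_le_right
end

section
/- For a complete Boolean algebra L, the weak upper space Υ L is a C-space (every point has a neighborhood base of cores) if and only if L is atomic. -/
/-- The core of a point w.r.t. a topology: saturation of the singleton. -/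
def coreT {L : Type*} (t : TopologicalSpace L) (u : L) : Set L :=
  {y | ∀ O : Set L, t.IsOpen O → u ∈ O → y ∈ O}

/-- Every open set of a generated topology contains, around each of its points,
a finite intersection of subbasic sets. -/
lemma gen_finite_subbasis {α : Type*} {S : Set (Set α)} {V : Set α}
    (h : TopologicalSpace.GenerateOpen S V) :
    ∀ p ∈ V, ∃ f : Set (Set α), f ⊆ S ∧ f.Finite ∧ p ∈ ⋂₀ f ∧ ⋂₀ f ⊆ V := by
  induction h with
  | basic s hs => exact fun p hp => ⟨{s}, by simpa using hs, Set.finite_singleton s,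
      by simpa using hp, by simp⟩
  | univ => exact fun p _ => ⟨∅, by simp, Set.finite_empty, by simp, by simp⟩
  | inter a b _ _ iha ihb =>
    intro p hp
    obtain ⟨f, hfS, hff, hpf, hfa⟩ := iha p hp.1
    obtain ⟨g, hgS, hgf, hpg, hgb⟩ := ihb p hp.2
    exact ⟨f ∪ g, Set.union_subset hfS hgS, hff.union hgf,
      by rw [Set.sInter_union]; exact ⟨hpf, hpg⟩,
      by rw [Set.sInter_union]; exact fun z hz => ⟨hfa hz.1, hgb hz.2⟩⟩
  | sUnion σ _ ih =>
    intro p hp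
    obtain ⟨t, htσ, hpt⟩ := hp
    obtain ⟨f, hfS, hff, hpf, hft⟩ := ih t htσ p hpt
    exact ⟨f, hfS, hff, hpf, fun z hz => ⟨t, htσ, hft hz⟩⟩

lemma upTop_isOpen_upper {L : Type*} [Preorder L] {O : Set L}
    (h : (upTop L).IsOpen O) : ∀ p q : L, p ∈ O → p ≤ q → q ∈ O := by
  change TopologicalSpace.GenerateOpen _ O at h
  induction h with
  | basic s hs =>
    obtain ⟨y, rfl⟩ := hs
    exact fun p q hp hpq hq => hp (hpq.trans hq)
  | univ => exact fun p q _ _ => trivial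
  | inter a b _ _ iha ihb => exact fun p q hp hpq => ⟨iha p q hp.1 hpq, ihb p q hp.2 hpq⟩
  | sUnion σ _ ih =>
    intro p q hp hpq
    obtain ⟨t, htσ, hpt⟩ := hp
    exact ⟨t, htσ, ih t htσ p q hpt hpq⟩

lemma upTop_isOpen_basic {L : Type*} [Preorder L] (y : L) :
    (upTop L).IsOpen {x | ¬ x ≤ y} :=
  TopologicalSpace.GenerateOpen.basic _ ⟨y, rfl⟩

lemma coreT_upTop {L : Type*} [Preorder L] (u : L) :
    coreT (upTop L) u = Set.Ici u := by
  ext z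
  constructor
  · intro hz
    by_contra hle
    exact (hz {x | ¬ x ≤ z} (upTop_isOpen_basic z) hle) le_rfl
  · intro hz O hO huO
    exact upTop_isOpen_upper hO u z huO hz

lemma atom_le_iff {L : Type*} [CompleteBooleanAlgebra L] {a : L} (ha : IsAtom a) (z : L) :
    a ≤ z ↔ ¬ z ≤ aᶜ := by
  constructor
  · intro h hz
    have h2 : a ≤ aᶜ := h.trans hz
    exact ha.1 (le_bot_iff.mp ((inf_compl_self a) ▸ le_inf le_rfl h2))
  · intro h
    rcases ha.le_iff.mp (inf_le_left : a ⊓ z ≤ a) with h0 | h0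
    · exact absurd (le_compl_iff_disjoint_right.mpr ((disjoint_iff.mpr h0).symm)) h
    · exact h0 ▸ inf_le_right

/-- For a complete Boolean algebra L, the weak upper space Υ L is
a C-space iff L is atomic. -/
theorem stmt_8 {L : Type*} [CompleteBooleanAlgebra L] :
    (∀ (x : L) (U : Set L), (upTop L).IsOpen U → x ∈ U →
      ∃ (u : L) (V : Set L), (upTop L).IsOpen V ∧ x ∈ V ∧
        V ⊆ coreT (upTop L) u ∧ coreT (upTop L) u ⊆ U) ↔
    (∀ x : L, x ≠ ⊥ → ∃ a : L, IsAtom a ∧ a ≤ x) := by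
  letI : TopologicalSpace L := upTop L
  constructor
  · -- C-space → atomic
    intro hC x hx
    have hxc : (⊤ : L) ∈ {z : L | ¬ z ≤ xᶜ} := by
      intro h
      exact hx (by simpa using compl_le_compl h)
    obtain ⟨u, V, hVopen, hTV, hVcore, hcoreU⟩ :=
      hC ⊤ {z : L | ¬ z ≤ xᶜ} (upTop_isOpen_basic xᶜ) hxc
    rw [coreT_upTop] at hVcore hcoreU
    obtain ⟨f, hfS, hff, hTf, hfV⟩ := gen_finite_subbasis hVopen ⊤ hTV
    have hy : ∀ s : Set L, ∃ y : L, (s ∈ f → s = {z | ¬ z ≤ y}) := by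
      intro s
      by_cases h : s ∈ f
      · obtain ⟨y, hys⟩ := hfS h
        exact ⟨y, fun _ => hys⟩
      · exact ⟨⊥, fun h' => absurd h' h⟩
    choose y hyspec using hy
    have key : ∀ z : L, (∀ s ∈ f, ¬ z ≤ y s) → u ≤ z := by
      intro z hz
      refine hVcore (hfV ?_)
      intro s hs
      rw [hyspec s hs]
      exact hz s hs
    have keyc : ∀ z : L, ¬ u ≤ z → ∃ s ∈ f, z ≤ y s := by
      intro z hz
      by_contra h
      push_neg at h
      exact hz (key z h)
    have hyT : ∀ s ∈ f, ¬ (⊤ : L) ≤ y s := by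
      intro s hs
      have := hTf s hs
      rwa [hyspec s hs] at this
    have hcore : ∀ z : L, u ≤ z → ¬ z ≤ xᶜ := fun z hz => hcoreU hz
    have hux : ¬ u ≤ xᶜ := by
      intro h
      exact hcore (u ⊔ xᶜ) le_sup_left (sup_le h le_rfl)
    set A : Set L := {a : L | a ≠ ⊥ ∧ a ≤ u ⊓ x ∧ ∃ s ∈ f, a = (y s)ᶜ} with hA
    have hAfin : A.Finite := by
      apply Set.Finite.subset (hff.image (fun s => (y s)ᶜ))
      rintro a ⟨_, _, s, hs, rfl⟩
      exact ⟨s, hs, rfl⟩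
    have hyne : ∀ s ∈ f, (y s)ᶜ ≠ ⊥ := by
      intro s hs h0
      apply hyT s hs
      have hyt : y s = ⊤ := by rw [← compl_compl (y s), h0, compl_bot]
      rw [hyt]
    have hAne : A.Nonempty := by
      obtain ⟨s, hs, hle⟩ := keyc (xᶜ ⊔ uᶜ) (by
        intro h
        apply hux
        calc u ≤ u ⊓ (xᶜ ⊔ uᶜ) := le_inf le_rfl h
          _ = u ⊓ xᶜ := by rw [inf_sup_left]; simp
          _ ≤ xᶜ := inf_le_right)
      have hcle : (y s)ᶜ ≤ u ⊓ x := by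
        have := compl_le_compl hle
        simpa [inf_comm] using this
      exact ⟨(y s)ᶜ, hyne s hs, hcle, s, hs, rfl⟩
    obtain ⟨a, haA, hamin⟩ := hAfin.toFinset.exists_minimal (by
      rwa [← Set.Finite.toFinset_nonempty hAfin] at hAne)
    rw [Set.Finite.mem_toFinset] at haA
    obtain ⟨hane, haux, s₀, hs₀, has₀⟩ := haA
    refine ⟨a, ⟨hane, ?_⟩, haux.trans inf_le_right⟩
    intro b hb
    by_contra hbne
    have hau : a ≤ u := haux.trans inf_le_left
    have hauc : a ⊓ uᶜ = ⊥ := le_bot_iff.mp (by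
      calc a ⊓ uᶜ ≤ u ⊓ uᶜ := inf_le_inf_right _ hau
        _ = ⊥ := inf_compl_self u)
    obtain ⟨s, hs, hle⟩ := keyc (aᶜ ⊔ b ⊔ uᶜ) (by
      intro h
      apply hb.ne
      have h2 : a ≤ b := by
        calc a ≤ a ⊓ (aᶜ ⊔ b ⊔ uᶜ) := le_inf le_rfl (hau.trans h)
          _ = (a ⊓ aᶜ) ⊔ (a ⊓ b) ⊔ (a ⊓ uᶜ) := by rw [inf_sup_left, inf_sup_left]
          _ = a ⊓ b := by rw [inf_compl_self, hauc]; simp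
          _ ≤ b := inf_le_right
      exact le_antisymm hb.le h2)
    have hcle : (y s)ᶜ ≤ a ⊓ bᶜ ⊓ u := by
      have := compl_le_compl hle
      simpa [compl_sup, compl_compl, inf_assoc, inf_comm, inf_left_comm] using this
    have hya : (y s)ᶜ ≤ a := (hcle.trans inf_le_left).trans inf_le_left
    have ha' : (y s)ᶜ ∈ A :=
      ⟨hyne s hs, le_inf (hya.trans hau) (hya.trans (haux.trans inf_le_right)), s, hs, rfl⟩
    have hlt : (y s)ᶜ < a := by
      refine lt_of_le_of_ne hya ?_
      intro heq
      have hab : a ≤ bᶜ := heq ▸ ((hcle.trans inf_le_left).trans inf_le_right)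
      refine hbne (le_bot_iff.mp ?_)
      calc b ≤ b ⊓ bᶜ := le_inf le_rfl (hb.le.trans hab)
        _ = ⊥ := inf_compl_self b
    rw [← Set.Finite.mem_toFinset hAfin] at ha'
    exact lt_irrefl _ (lt_of_lt_of_le hlt (hamin ha' hlt.le))
  · -- atomic → C-space
    intro hAt x U hU hxU
    obtain ⟨f, hfS, hff, hxf, hfU⟩ := gen_finite_subbasis hU x hxU
    have hy : ∀ s : Set L, ∃ y : L, (s ∈ f → s = {z | ¬ z ≤ y}) := by
      intro s
      by_cases h : s ∈ f
      · obtain ⟨y, hys⟩ := hfS h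
        exact ⟨y, fun _ => hys⟩
      · exact ⟨⊥, fun h' => absurd h' h⟩
    choose y hyspec using hy
    have hatom : ∀ s : Set L, ∃ a : L, (s ∈ f → IsAtom a ∧ a ≤ x ⊓ (y s)ᶜ) := by
      intro s
      by_cases h : s ∈ f
      · obtain ⟨a, ha⟩ := hAt (x ⊓ (y s)ᶜ) (by
          intro h0
          have hxy : x ≤ y s := by
            have hd : Disjoint x (y s)ᶜ := disjoint_iff.mpr h0
            simpa using le_compl_iff_disjoint_right.mpr hd
          have := hxf s h
          rw [hyspec s h] at this
          exact this hxy)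
        exact ⟨a, fun _ => ha⟩
      · exact ⟨⊥, fun h' => absurd h' h⟩
    choose a haspec using hatom
    set u : L := ⨆ s ∈ f, a s with hu
    refine ⟨u, ⋂ s ∈ f, {z : L | ¬ z ≤ (a s)ᶜ}, ?_, ?_, ?_, ?_⟩
    · exact Set.Finite.isOpen_biInter hff (fun s hs => upTop_isOpen_basic (a s)ᶜ)
    · refine Set.mem_iInter₂.mpr (fun s hs => ?_)
      exact (atom_le_iff (haspec s hs).1 x).mp ((haspec s hs).2.trans inf_le_left)
    · intro z hz
      rw [coreT_upTop]
      refine iSup₂_le (fun s hs => ?_)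
      exact (atom_le_iff (haspec s hs).1 z).mpr (Set.mem_iInter₂.mp hz s hs)
    · intro z hz
      rw [coreT_upTop] at hz
      refine hfU (fun s hs => ?_)
      rw [hyspec s hs]
      intro hzy
      have hale : a s ≤ u := le_iSup₂ (f := fun s (_ : s ∈ f) => a s) s hs
      have h1 : a s ≤ y s := (hale.trans hz).trans hzy
      have h2 : a s ≤ (y s)ᶜ := (haspec s hs).2.trans inf_le_right
      exact (haspec s hs).1.1 (le_bot_iff.mp (by
        calc a s ≤ y s ⊓ (y s)ᶜ := le_inf h1 h2
          _ = ⊥ := inf_compl_self _))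
end

section
/- Let (X, S) be a C-space with interior relation ρ defined by x ρ y iff y ∈ int(↑x). Then for every closed set A, the closure of ρA equals A, where ρA = {x : ∃ a ∈ A, x ρ a}; moreover ρA is the least lower set (with respect to the specialization order) whose closure is A. -/
/-- The interior relation of a space: x ρ y iff y ∈ int(↑x). -/
def rho {X : Type*} [TopologicalSpace X] (x y : X) : Prop := y ∈ interior (core x)

/-- In a C-space, for every closed set A, closure (ρA) = A, and
ρA is the least lower set with closure A. -/
theorem stmt_9 {X : Type*} [TopologicalSpace X]
    (hC : ∀ (x : X) (U : Set X), IsOpen U → x ∈ U →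
      ∃ u : X, x ∈ interior (core u) ∧ core u ⊆ U) :
    ∀ A : Set X, IsClosed A →
      closure {x | ∃ a ∈ A, rho x a} = A ∧
      (∀ p ∈ {x | ∃ a ∈ A, rho x a}, ∀ q, sle q p → q ∈ {x | ∃ a ∈ A, rho x a}) ∧
      (∀ Y : Set X, (∀ p ∈ Y, ∀ q, sle q p → q ∈ Y) → closure Y = A →
        {x | ∃ a ∈ A, rho x a} ⊆ Y) := by
  intro A hA
  have hsub : {x | ∃ a ∈ A, rho x a} ⊆ A := by
    rintro x ⟨a, haA, hra⟩
    -- a ∈ interior (core x) ⊆ core x, so sle x a, so x ∈ closure {a} ⊆ A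
    have hxa : sle x a := interior_subset hra
    by_contra hx
    have : x ∈ Aᶜ := hx
    have := hxa Aᶜ hA.isOpen_compl this
    exact this haA
  refine ⟨?_, ?_, ?_⟩
  · apply subset_antisymm
    · exact closure_minimal hsub hA
    · intro a haA
      rw [mem_closure_iff]
      intro U hU haU
      obtain ⟨u, hu1, hu2⟩ := hC a U hU haU
      exact ⟨u, hu2 (fun V hV huV => huV), a, haA, hu1⟩
  · rintro p ⟨a, haA, hpa⟩ q hqp
    refine ⟨a, haA, ?_⟩
    have hcc : core p ⊆ core q := fun z hz U hU hqU => hz U hU (hqp U hU hqU)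
    exact interior_mono hcc hpa
  · rintro Y hY hclY x ⟨a, haA, hxa⟩
    have haY : a ∈ closure Y := by rw [hclY]; exact haA
    rw [mem_closure_iff] at haY
    obtain ⟨y, hy1, hy2⟩ := haY (interior (core x)) isOpen_interior hxa
    exact hY y hy2 x (interior_subset hy1)
end

section
/- In a C-space, the interior relation ρ is idempotent: x ρ z if and only if there exists y with x ρ y and y ρ z. -/
/-- In a C-space, the interior relation is idempotent. -/
theorem stmt_10 {X : Type*} [TopologicalSpace X]
    (hC : ∀ (x : X) (U : Set X), IsOpen U → x ∈ U →
      ∃ u : X, x ∈ interior (core u) ∧ core u ⊆ U) :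
    ∀ x z : X, rho x z ↔ ∃ y : X, rho x y ∧ rho y z := by
  intro x z
  constructor
  · intro hxz
    obtain ⟨u, hzu, hsub⟩ := hC z (interior (core x)) isOpen_interior hxz
    refine ⟨u, ?_, hzu⟩
    exact hsub (fun U hU hu => hu)
  · rintro ⟨y, hxy, hyz⟩
    have hyx : y ∈ core x := interior_subset hxy
    have hsub : core y ⊆ core x := fun w hw U hU hx => hw U hU (hyx U hU hx)
    exact interior_mono hsub hyz
end

section
/- The topology of a C-space is always finer than the Scott topology of its specialization preorder: every Scott-open set of (X, ≤_S) is open in S. -/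
/-- The topology of a C-space is finer than the Scott topology of
its specialization preorder. -/
theorem stmt_12 {X : Type*} [TopologicalSpace X]
    (hC : ∀ (x : X) (U : Set X), IsOpen U → x ∈ U →
      ∃ u : X, x ∈ interior (core u) ∧ core u ⊆ U) :
    ∀ U : Set X,
      (∀ x ∈ U, ∀ y, sle x y → y ∈ U) →
      (∀ D : Set X, D.Nonempty → (∀ a ∈ D, ∀ b ∈ D, ∃ c ∈ D, sle a c ∧ sle b c) →
        ∀ y, ((∀ d ∈ D, sle d y) ∧ ∀ z, (∀ d ∈ D, sle d z) → sle y z) →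
          y ∈ U → (D ∩ U).Nonempty) →
      IsOpen U := by
  intro U hUp hScott
  rw [isOpen_iff_forall_mem_open]
  intro x hx
  set D : Set X := {u | x ∈ interior (core u)} with hD
  have hDne : D.Nonempty := by
    obtain ⟨u, hu, -⟩ := hC x Set.univ isOpen_univ (Set.mem_univ x)
    exact ⟨u, hu⟩
  have hdir : ∀ a ∈ D, ∀ b ∈ D, ∃ c ∈ D, sle a c ∧ sle b c := by
    intro a ha b hb
    obtain ⟨c, hc, hsub⟩ := hC x (interior (core a) ∩ interior (core b))
      (isOpen_interior.inter isOpen_interior) ⟨ha, hb⟩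
    have hcc : c ∈ core c := fun V _ h => h
    have := hsub hcc
    exact ⟨c, hc, interior_subset this.1, interior_subset this.2⟩
  have hub : ∀ d ∈ D, sle d x := fun d hd => interior_subset hd
  have hlub : ∀ z, (∀ d ∈ D, sle d z) → sle x z := by
    intro z hz V hV hxV
    obtain ⟨u, hu, hsub⟩ := hC x V hV hxV
    exact hsub (hz u hu)
  obtain ⟨d, hdD, hdU⟩ := hScott D hDne hdir x ⟨hub, hlub⟩ hx
  exact ⟨interior (core d), fun y hy => hUp d hdU y (interior_subset hy),
    isOpen_interior, hdD⟩
end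

section
/- In a C-space (X, S) with specialization preorder Q, every compact saturated set is closed in the weak lower topology υQ̃ (generated by complements of principal filters ↑x); consequently the cocompact topology of S equals the weak lower topology of Q. -/
/-- The weak lower topology of the specialization preorder: generated by the
complements of principal filters (cores). -/
def weakLower (X : Type*) [TopologicalSpace X] : TopologicalSpace X :=
  TopologicalSpace.generateFrom {U : Set X | ∃ x : X, U = (core x)ᶜ}

lemma core_isCompact {X : Type*} [TopologicalSpace X] (x : X) : IsCompact (core x) := by
  apply isCompact_of_finite_subcover
  intro ι U hU hcov
  have hx : x ∈ core x := fun V _ hxV => hxV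
  obtain ⟨i, hi⟩ := Set.mem_iUnion.1 (hcov hx)
  exact ⟨{i}, fun y hy =>
    Set.mem_iUnion₂.2 ⟨i, Finset.mem_singleton_self i, hy (U i) (hU i) hi⟩⟩

lemma core_saturated {X : Type*} [TopologicalSpace X] (x : X) :
    ∀ a ∈ core x, ∀ b, sle a b → b ∈ core x :=
  fun a ha b hab U hU hxU => hab U hU (ha U hU hxU)

/-- In a C-space, every compact saturated set is closed in the
weak lower topology; consequently the cocompact topology equals the weak lower
topology of the specialization preorder. -/
theorem stmt_13 {X : Type*} [TopologicalSpace X]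
    (hC : ∀ (x : X) (U : Set X), IsOpen U → x ∈ U →
      ∃ u : X, x ∈ interior (core u) ∧ core u ⊆ U) :
    (∀ K : Set X, IsCompact K → (∀ a ∈ K, ∀ b, sle a b → b ∈ K) →
      @IsClosed X (weakLower X) K) ∧
    TopologicalSpace.generateFrom
        {U : Set X | ∃ K : Set X, IsCompact K ∧ (∀ a ∈ K, ∀ b, sle a b → b ∈ K) ∧ U = Kᶜ}
      = weakLower X := by
  have key : ∀ K : Set X, IsCompact K → (∀ a ∈ K, ∀ b, sle a b → b ∈ K) →
      @IsClosed X (weakLower X) K := by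
    intro K hK hsat
    have hmem : ∀ y ∈ Kᶜ, ∃ V, V ⊆ Kᶜ ∧ @IsOpen X (weakLower X) V ∧ y ∈ V := by
      intro y hy
      have hchoice : ∀ a : K, ∃ u : X, (a : X) ∈ interior (core u) ∧ y ∉ core u := by
        rintro ⟨a, ha⟩
        have hns : ¬ sle a y := fun h => hy (hsat a ha y h)
        simp only [sle, not_forall] at hns
        obtain ⟨U, hUo, haU, hyU⟩ := hns
        obtain ⟨u, h1, h2⟩ := hC a U hUo haU
        exact ⟨u, h1, fun h => hyU (h2 h)⟩
      choose u hu1 hu2 using hchoice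
      have hcover : K ⊆ ⋃ a : K, interior (core (u a)) := fun a ha =>
        Set.mem_iUnion.2 ⟨⟨a, ha⟩, hu1 ⟨a, ha⟩⟩
      obtain ⟨s, hs⟩ := hK.elim_finite_subcover (fun a : K => interior (core (u a)))
        (fun _ => isOpen_interior) hcover
      refine ⟨⋂ a ∈ s, (core (u a))ᶜ, ?_, ?_, ?_⟩
      · intro z hz hzK
        obtain ⟨a, has, hza⟩ := Set.mem_iUnion₂.1 (hs hzK)
        exact (Set.mem_iInter₂.1 hz a has) (interior_subset hza)
      · exact @isOpen_biInter_finset X _ (weakLower X) s _ fun a _ =>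
          TopologicalSpace.GenerateOpen.basic _ ⟨u a, rfl⟩
      · exact Set.mem_iInter₂.2 fun a _ => hu2 a
    letI := weakLower X
    exact ⟨isOpen_iff_forall_mem_open.2 hmem⟩
  refine ⟨key, le_antisymm ?_ ?_⟩
  · exact TopologicalSpace.generateFrom_anti fun V hV => by
      obtain ⟨x, rfl⟩ := hV
      exact ⟨core x, core_isCompact x, core_saturated x, rfl⟩
  · apply le_generateFrom
    rintro U ⟨K, hK, hsat, rfl⟩
    exact (key K hK hsat).isOpen_compl
end

section
/- For every continuous poset, the way-below relation is a C-order: it is idempotent (has the interpolation property), each set ≪y is an ideal with respect to the induced lower order, and ≪x = ≪y implies x = y. -/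
variable {P : Type*} [PartialOrder P]

/-- An ideal of a poset: a nonempty, directed lower set. -/
def Idl (I : Set P) : Prop :=
  I.Nonempty ∧ (∀ a ∈ I, ∀ b, b ≤ a → b ∈ I) ∧
    ∀ a ∈ I, ∀ b ∈ I, ∃ c ∈ I, a ≤ c ∧ b ≤ c

/-- The way-below relation: x ≪ y iff x belongs to every ideal possessing a
join above y. -/
def wb (x y : P) : Prop :=
  ∀ I : Set P, Idl I → ∀ s, IsLUB I s → y ≤ s → x ∈ I

/-- The lower quasi-order induced by the way-below relation. -/
def leWb (a b : P) : Prop := ∀ z, wb z a → wb z b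

lemma idl_down (y : P) : Idl {a | a ≤ y} :=
  ⟨⟨y, le_refl y⟩, fun a ha b hb => le_trans hb ha,
    fun a ha b hb => ⟨y, le_refl y, ha, hb⟩⟩

lemma lub_down (y : P) : IsLUB {a : P | a ≤ y} y :=
  ⟨fun a ha => ha, fun u hu => hu (le_refl y)⟩

lemma wb_le {x y : P} (h : wb x y) : x ≤ y :=
  h _ (idl_down y) y (lub_down y) (le_refl y)

lemma le_wb {x y z : P} (hxy : x ≤ y) (h : wb y z) : wb x z :=
  fun I hI s hs hzs => hI.2.1 y (h I hI s hs hzs) x hxy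

lemma wb_le_right {x y z : P} (h : wb x y) (hyz : y ≤ z) : wb x z :=
  fun I hI s hs hzs => h I hI s hs (le_trans hyz hzs)

lemma wb_trans {x y z : P} (hxy : wb x y) (hyz : wb y z) : wb x z := by
  intro I hI s hs hzs
  exact hxy I hI s hs (hs.1 (hyz I hI s hs hzs))

lemma le_leWb {a b : P} (h : a ≤ b) : leWb a b :=
  fun z hz => wb_le_right hz h

/-- For a continuous poset, the way-below relation is a C-order:
idempotent (interpolation), each ≪y is an ideal w.r.t. the induced lower
quasi-order, and it is separating. -/
theorem stmt_15
    (hcont : ∀ y : P, Idl {x | wb x y} ∧ IsLUB {x | wb x y} y) :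
    (∀ x z : P, wb x z ↔ ∃ y, wb x y ∧ wb y z) ∧
    (∀ y : P,
      (∃ x, wb x y) ∧
      (∀ a, wb a y → ∀ b, leWb b a → wb b y) ∧
      (∀ a b, wb a y → wb b y → ∃ c, wb c y ∧ leWb a c ∧ leWb b c)) ∧
    (∀ x y : P, {z | wb z x} = {z | wb z y} → x = y) := by
  refine ⟨?_, ?_, ?_⟩
  · intro x z
    constructor
    · intro hxz
      set I : Set P := {a | ∃ y, wb a y ∧ wb y z} with hIdef
      have hIdl : Idl I := by
        refine ⟨?_, ?_, ?_⟩
        · obtain ⟨y, hy⟩ := (hcont z).1.1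
          obtain ⟨a, ha⟩ := (hcont y).1.1
          exact ⟨a, y, ha, hy⟩
        · rintro a ⟨y, hay, hyz⟩ b hba
          exact ⟨y, le_wb hba hay, hyz⟩
        · rintro a ⟨y₁, hay, hyz⟩ b ⟨y₂, hby, hyz'⟩
          obtain ⟨y₃, hy₃, h13, h23⟩ := (hcont z).1.2.2 y₁ hyz y₂ hyz'
          obtain ⟨c, hc, hac, hbc⟩ :=
            (hcont y₃).1.2.2 a (wb_le_right hay h13) b (wb_le_right hby h23)
          exact ⟨c, ⟨y₃, hc, hy₃⟩, hac, hbc⟩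
      have hlub : IsLUB I z := by
        constructor
        · rintro a ⟨y, hay, hyz⟩
          exact le_trans (wb_le hay) (wb_le hyz)
        · intro u hu
          apply (hcont z).2.2
          intro y hy
          apply (hcont y).2.2
          intro a ha
          exact hu ⟨y, ha, hy⟩
      exact hxz I hIdl z hlub (le_refl z)
    · rintro ⟨y, hxy, hyz⟩
      exact wb_trans hxy hyz
  · intro y
    refine ⟨(hcont y).1.1, ?_, ?_⟩
    · intro a hay b hba
      -- b ≤ a since b = ⋁ ≪b and every z ≪ b satisfies z ≪ a hence z ≤ a
      have hb_le_a : b ≤ a := by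
        apply (hcont b).2.2
        intro z hz
        exact wb_le (hba z hz)
      exact le_wb hb_le_a hay
    · intro a b hay hby
      obtain ⟨c, hc, hac, hbc⟩ := (hcont y).1.2.2 a hay b hby
      exact ⟨c, hc, le_leWb hac, le_leWb hbc⟩
  · intro x y h
    exact ((hcont x).2).unique (h ▸ (hcont y).2)
end

section
/- Let S = (X, ≤, T) be a semilattice-ordered topological space whose specialization order of T equals ≤, which is ↑-stable and locally filtered. Then the binary meet operation is jointly continuous, i.e., S is a topological semilattice. -/
/-- A compatible, ↑-stable and locally filtered semilattice-ordered
space is a topological semilattice: binary meet is jointly continuous. -/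
theorem stmt_18 {X : Type*} [SemilatticeInf X] [TopologicalSpace X]
    (hcompat : ∀ x y : X, x ≤ y ↔ ∀ U : Set X, IsOpen U → x ∈ U → y ∈ U)
    (hup : ∀ O : Set X, IsOpen O → IsOpen {y | ∃ x ∈ O, x ≤ y})
    (hlf : ∀ (x : X) (U : Set X), IsOpen U → x ∈ U →
      ∃ D : Set X, x ∈ interior D ∧ D ⊆ U ∧
        ∀ a ∈ D, ∀ b ∈ D, ∃ c ∈ D, c ≤ a ∧ c ≤ b) :
    Continuous fun p : X × X => p.1 ⊓ p.2 := by
  rw [continuous_def]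
  intro U hU
  rw [isOpen_iff_forall_mem_open]
  rintro ⟨x, y⟩ hxy
  simp only [Set.mem_preimage] at hxy
  obtain ⟨D, hmem, hDU, hfilt⟩ := hlf (x ⊓ y) U hU hxy
  set V : Set X := {z | ∃ w ∈ interior D, w ≤ z} with hV
  have hVopen : IsOpen V := hup _ isOpen_interior
  refine ⟨V ×ˢ V, ?_, (hVopen.prod hVopen), ⟨⟨x ⊓ y, hmem, inf_le_left⟩,
    ⟨x ⊓ y, hmem, inf_le_right⟩⟩⟩
  rintro ⟨a, b⟩ ⟨⟨a', ha', haa⟩, ⟨b', hb', hbb⟩⟩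
  obtain ⟨c, hc, hca, hcb⟩ := hfilt a' (interior_subset ha') b' (interior_subset hb')
  have hcab : c ≤ a ⊓ b := le_inf (hca.trans haa) (hcb.trans hbb)
  exact (hcompat c (a ⊓ b)).mp hcab U hU (hDU hc)
end
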